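/- Let H be a connected graph with at least one edge. Every graph G on n vertices admits a family F of connected subgraphs of G, each containing a copy of H, with |F| ≤ 2n², such that F strongly separates the copies of H in G; such a family is given by taking, for each edge e of G, those connected components of G − e that contain a copy of H. -/

import Mathlib

open SimpleGraph

/-- The family `F` of subgraphs of `G` strongly separates the copies of `H` in `G`. -/
def StronglySeparatesCopies {α V : Type*} (H : SimpleGraph α) (G : SimpleGraph V)
    (F : Set G.Subgraph) : Prop :=
  ∀ H₁ H₂ : G.Subgraph, Nonempty (H₁.coe ≃g H) → Nonempty (H₂.coe ≃g H) → H₁ ≠ H₂ →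
    ∃ F₁ ∈ F, ∃ F₂ ∈ F, H₁ ≤ F₁ ∧ ¬ H₂ ≤ F₁ ∧ H₂ ≤ F₂ ∧ ¬ H₁ ≤ F₂

section Aux

variable {V : Type*} {G : SimpleGraph V}

/-- The connected component of `a` in `G.deleteEdges s`, as a subgraph of `G`. -/
def compSub (G : SimpleGraph V) (s : Set (Sym2 V)) (a : V) : G.Subgraph where
  verts := {v | (G.deleteEdges s).Reachable a v}
  Adj u v := (G.deleteEdges s).Adj u v ∧ (G.deleteEdges s).Reachable a u ∧
    (G.deleteEdges s).Reachable a v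
  adj_sub h := (G.deleteEdges_le s) h.1
  edge_vert h := h.2.1
  symm := ⟨fun _ _ h => ⟨h.1.symm, h.2.2, h.2.1⟩⟩

lemma compSub_connected (G : SimpleGraph V) (s : Set (Sym2 V)) (a : V) :
    (compSub G s a).coe.Connected := by
  have ha : a ∈ (compSub G s a).verts := Reachable.refl a
  rw [connected_iff]
  refine ⟨?_, ⟨⟨a, ha⟩⟩⟩
  have key : ∀ (u v : V) (p : (G.deleteEdges s).Walk u v)
      (hu : (G.deleteEdges s).Reachable a u),
      (compSub G s a).coe.Reachable ⟨a, ha⟩ ⟨u, hu⟩ →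
      (compSub G s a).coe.Reachable ⟨a, ha⟩ ⟨v, hu.trans p.reachable⟩ := by
    intro u v p
    induction p with
    | nil => intro hu h; exact h
    | @cons u b v hadj p ih =>
      intro hu h
      have hb : (G.deleteEdges s).Reachable a b := hu.trans hadj.reachable
      have step : (compSub G s a).coe.Adj ⟨u, hu⟩ ⟨b, hb⟩ := ⟨hadj, hu, hb⟩
      exact ih hb (h.trans step.reachable)
  rintro ⟨u, hu⟩ ⟨v, hv⟩
  have h1 := key a u (Nonempty.some hu) (Reachable.refl a) (Reachable.refl _)
  have h2 := key a v (Nonempty.some hv) (Reachable.refl a) (Reachable.refl _)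
  exact h1.symm.trans h2

lemma compSub_congr {s : Set (Sym2 V)} {a b : V}
    (hab : (G.deleteEdges s).Reachable a b) : compSub G s a = compSub G s b := by
  have h : ∀ v, (G.deleteEdges s).Reachable a v ↔ (G.deleteEdges s).Reachable b v :=
    fun v => ⟨fun h' => hab.symm.trans h', fun h' => hab.trans h'⟩
  refine SimpleGraph.Subgraph.ext ?_ ?_
  · ext v
    exact h v
  · ext u v
    show _ ∧ _ ∧ _ ↔ _ ∧ _ ∧ _
    rw [h u, h v]

lemma le_compSub {s : Set (Sym2 V)} {a : V} {B : G.Subgraph}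
    (hc : B.coe.Connected) (ha : a ∈ B.verts)
    (hadj : ∀ u v, B.Adj u v → (G.deleteEdges s).Adj u v) : B ≤ compSub G s a := by
  have hreach : ∀ v ∈ B.verts, (G.deleteEdges s).Reachable a v := by
    intro v hv
    have hr := hc.preconnected ⟨a, ha⟩ ⟨v, hv⟩
    exact hr.map ⟨fun x => x.val, fun {x y} h => hadj _ _ h⟩
  exact ⟨fun v hv => hreach v hv,
    fun u v h => ⟨hadj _ _ h, hreach _ (B.edge_vert h), hreach _ (B.edge_vert h.symm)⟩⟩

end Aux

/-- For every connected graph `H` with at least one edge, every graph `G` on `n` vertices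
admits a family of at most `2n²` connected subgraphs, each containing a copy of `H`, that
strongly separates the copies of `H` in `G`. -/
theorem copy_separation_by_connected_subgraphs
    (α : Type) [Fintype α] (H : SimpleGraph α) (hHc : H.Connected)
    (hHe : H.edgeSet.Nonempty)
    (V : Type) [Fintype V] (G : SimpleGraph V) :
    ∃ F : Set G.Subgraph,
      F.Finite ∧
      (∀ A ∈ F, A.coe.Connected ∧ ∃ H₁ : G.Subgraph, H₁ ≤ A ∧ Nonempty (H₁.coe ≃g H)) ∧
      F.ncard ≤ 2 * (Fintype.card V) ^ 2 ∧
      StronglySeparatesCopies H G F := by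
  classical
  obtain ⟨x₀, y₀, hxy₀⟩ : ∃ x y, H.Adj x y := by
    obtain ⟨e₀, he₀⟩ := hHe
    induction e₀ using Sym2.ind with
    | _ x y => exact ⟨x, y, he₀⟩
  have hHdeg : ∀ c : α, ∃ w, H.Adj c w := by
    intro c
    obtain ⟨p⟩ := hHc.preconnected c x₀
    cases p with
    | nil => exact ⟨y₀, hxy₀⟩
    | cons h _ => exact ⟨_, h⟩
  have copy_conn : ∀ (B : G.Subgraph), (B.coe ≃g H) → B.coe.Connected := fun B e =>
    (Iso.connected_iff e).mpr hHc
  have copy_deg : ∀ (B : G.Subgraph) (e : B.coe ≃g H) (v : V) (hv : v ∈ B.verts),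
      ∃ w, B.Adj v w := by
    intro B e v hv
    obtain ⟨w, hw⟩ := hHdeg (e ⟨v, hv⟩)
    have h2 : H.Adj (e ⟨v, hv⟩) (e (e.symm w)) := by
      rw [e.apply_symm_apply]; exact hw
    exact ⟨(e.symm w : B.verts), e.map_rel_iff.mp h2⟩
  have copy_ncard : ∀ (B : G.Subgraph), (B.coe ≃g H) → B.edgeSet.ncard = H.edgeSet.ncard := by
    intro B e
    rw [← B.image_coe_edgeSet_coe,
      Set.ncard_image_of_injective _ (Sym2.map.injective Subtype.val_injective),
      ← Nat.card_coe_set_eq, ← Nat.card_coe_set_eq]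
    exact Nat.card_congr e.mapEdgeSet
  have copy_edge : ∀ (B : G.Subgraph), (B.coe ≃g H) → ∃ u v : V, B.Adj u v := by
    intro B e
    have h2 : H.Adj (e (e.symm x₀)) (e (e.symm y₀)) := by
      rw [e.apply_symm_apply, e.apply_symm_apply]; exact hxy₀
    exact ⟨_, _, e.map_rel_iff.mp h2⟩
  have key_edge : ∀ B₁ B₂ : G.Subgraph, (B₁.coe ≃g H) → (B₂.coe ≃g H) → B₁ ≠ B₂ →
      ∃ x y, B₂.Adj x y ∧ ¬ B₁.Adj x y := by
    intro B₁ B₂ e₁ e₂ hne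
    by_contra hcon
    push_neg at hcon
    have hsub : B₂.edgeSet ⊆ B₁.edgeSet := by
      intro e he
      induction e using Sym2.ind with
      | _ u v => exact hcon u v he
    have hcard : B₁.edgeSet.ncard ≤ B₂.edgeSet.ncard := by
      rw [copy_ncard B₁ e₁, copy_ncard B₂ e₂]
    have hEq : B₂.edgeSet = B₁.edgeSet :=
      Set.eq_of_subset_of_ncard_le hsub hcard (Set.toFinite _)
    apply hne
    have hAdj : B₁.Adj = B₂.Adj := by
      ext u v
      rw [← SimpleGraph.Subgraph.mem_edgeSet, ← SimpleGraph.Subgraph.mem_edgeSet, hEq]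
    refine SimpleGraph.Subgraph.ext ?_ hAdj
    ext v
    constructor
    · intro hv
      obtain ⟨w, hw⟩ := copy_deg B₁ e₁ v hv
      exact B₂.edge_vert (hAdj ▸ hw)
    · intro hv
      obtain ⟨w, hw⟩ := copy_deg B₂ e₂ v hv
      exact B₁.edge_vert (hAdj ▸ hw)
  set Fam : Set G.Subgraph :=
    {A | (A ∈ (Set.range fun a : V => compSub G ∅ a) ∪
      (Set.range fun p : V × V => compSub G {s(p.1, p.2)} p.1)) ∧
      ∃ B : G.Subgraph, B ≤ A ∧ Nonempty (B.coe ≃g H)} with hFamdef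
  have hFamS : Fam ⊆ (Set.range fun a : V => compSub G ∅ a) ∪
      (Set.range fun p : V × V => compSub G {s(p.1, p.2)} p.1) := fun A hA => hA.1
  have hSfin : ((Set.range fun a : V => compSub G ∅ a) ∪
      (Set.range fun p : V × V => compSub G {s(p.1, p.2)} p.1)).Finite :=
    (Set.finite_range _).union (Set.finite_range _)
  have main : ∀ B₁ B₂ : G.Subgraph, (B₁.coe ≃g H) → (B₂.coe ≃g H) → B₁ ≠ B₂ →
      ∃ F₁ ∈ Fam, B₁ ≤ F₁ ∧ ¬ B₂ ≤ F₁ := by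
    intro B₁ B₂ e₁ e₂ hne
    obtain ⟨x, y, hxy2, hxy1⟩ := key_edge B₁ B₂ e₁ e₂ hne
    obtain ⟨u₀, v₀, huv⟩ := copy_edge B₁ e₁
    have ha : u₀ ∈ B₁.verts := B₁.edge_vert huv
    have hadj : ∀ u v, B₁.Adj u v → (G.deleteEdges {s(x, y)}).Adj u v := by
      intro u v h
      rw [SimpleGraph.deleteEdges_adj]
      refine ⟨B₁.adj_sub h, ?_⟩
      intro hmem
      rw [Set.mem_singleton_iff] at hmem
      apply hxy1
      have hh : s(u, v) ∈ B₁.edgeSet := h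
      rw [hmem] at hh
      exact hh
    have hle : B₁ ≤ compSub G {s(x, y)} u₀ := le_compSub (copy_conn B₁ e₁) ha hadj
    have hnle : ¬ B₂ ≤ compSub G {s(x, y)} u₀ := by
      intro hle2
      have h1 : (compSub G {s(x, y)} u₀).Adj x y := hle2.2 hxy2
      have h2 := h1.1
      rw [SimpleGraph.deleteEdges_adj] at h2
      exact h2.2 rfl
    refine ⟨compSub G {s(x, y)} u₀, ⟨?_, B₁, hle, ⟨e₁⟩⟩, hle, hnle⟩
    by_cases hx : (G.deleteEdges {s(x, y)}).Reachable u₀ x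
    · exact Or.inr ⟨(x, y), (compSub_congr hx).symm⟩
    by_cases hy : (G.deleteEdges {s(x, y)}).Reachable u₀ y
    · refine Or.inr ⟨(y, x), ?_⟩
      show compSub G {s(y, x)} y = compSub G {s(x, y)} u₀
      rw [show s(y, x) = s(x, y) from Sym2.eq_swap]
      exact (compSub_congr hy).symm
    · refine Or.inl ⟨u₀, ?_⟩
      have back : ∀ (u v : V) (p : G.Walk u v),
          (G.deleteEdges {s(x, y)}).Reachable u₀ u →
          (G.deleteEdges {s(x, y)}).Reachable u₀ v := by
        intro u v p
        induction p with
        | nil => exact id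
        | @cons u b v hadj' p ih =>
          intro hu
          have hne' : s(u, b) ≠ s(x, y) := by
            intro hEq
            rw [Sym2.eq_iff] at hEq
            rcases hEq with ⟨h1, h2⟩ | ⟨h1, h2⟩
            · exact hx (h1 ▸ hu)
            · exact hy (h1 ▸ hu)
          have hAdj' : (G.deleteEdges {s(x, y)}).Adj u b := by
            rw [SimpleGraph.deleteEdges_adj]
            exact ⟨hadj', by simpa using hne'⟩
          exact ih (hu.trans hAdj'.reachable)
      have hiff : ∀ v, (G.deleteEdges {s(x, y)}).Reachable u₀ v ↔ G.Reachable u₀ v := by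
        intro v
        constructor
        · intro h; exact h.mono (SimpleGraph.deleteEdges_le _)
        · intro h; obtain ⟨p⟩ := h; exact back u₀ v p (Reachable.refl u₀)
      refine SimpleGraph.Subgraph.ext ?_ ?_
      · ext v
        show (G.deleteEdges ∅).Reachable u₀ v ↔ (G.deleteEdges {s(x, y)}).Reachable u₀ v
        rw [SimpleGraph.deleteEdges_empty]
        exact (hiff v).symm
      · ext u v
        show ((G.deleteEdges ∅).Adj u v ∧ _ ∧ _) ↔
          ((G.deleteEdges {s(x, y)}).Adj u v ∧ _ ∧ _)
        rw [SimpleGraph.deleteEdges_empty]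
        constructor
        · rintro ⟨h1, h2, h3⟩
          have h2' := (hiff u).mpr h2
          have h3' := (hiff v).mpr h3
          refine ⟨?_, h2', h3'⟩
          rw [SimpleGraph.deleteEdges_adj]
          refine ⟨h1, ?_⟩
          intro hmem
          rw [Set.mem_singleton_iff, Sym2.eq_iff] at hmem
          rcases hmem with ⟨hh1, hh2⟩ | ⟨hh1, hh2⟩
          · exact hx (hh1 ▸ h2')
          · exact hy (hh1 ▸ h2')
        · rintro ⟨h1, h2, h3⟩
          exact ⟨(SimpleGraph.deleteEdges_le _) h1, (hiff u).mp h2, (hiff v).mp h3⟩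
  refine ⟨Fam, hSfin.subset hFamS, ?_, ?_, ?_⟩
  · rintro A ⟨hAS, hB⟩
    refine ⟨?_, hB⟩
    rcases hAS with ⟨a, rfl⟩ | ⟨p, rfl⟩
    · exact compSub_connected G ∅ a
    · exact compSub_connected G _ p.1
  · have h1 : Fam.ncard ≤ ((Set.range fun a : V => compSub G ∅ a) ∪
        (Set.range fun p : V × V => compSub G {s(p.1, p.2)} p.1)).ncard :=
      Set.ncard_le_ncard hFamS hSfin
    have h2 := Set.ncard_union_le (Set.range fun a : V => compSub G ∅ a)
      (Set.range fun p : V × V => compSub G {s(p.1, p.2)} p.1)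
    have h3 : (Set.range fun a : V => compSub G ∅ a).ncard ≤ Fintype.card V := by
      rw [← Set.image_univ]
      calc ((fun a : V => compSub G ∅ a) '' Set.univ).ncard
          ≤ (Set.univ : Set V).ncard := Set.ncard_image_le Set.finite_univ
        _ = Fintype.card V := by rw [Set.ncard_univ, Nat.card_eq_fintype_card]
    have h4 : (Set.range fun p : V × V => compSub G {s(p.1, p.2)} p.1).ncard ≤
        Fintype.card V * Fintype.card V := by
      rw [← Set.image_univ]
      calc ((fun p : V × V => compSub G {s(p.1, p.2)} p.1) '' Set.univ).ncard
          ≤ (Set.univ : Set (V × V)).ncard := Set.ncard_image_le Set.finite_univ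
        _ = Fintype.card V * Fintype.card V := by
            rw [Set.ncard_univ, Nat.card_eq_fintype_card, Fintype.card_prod]
    have h5 : Fintype.card V ≤ Fintype.card V * Fintype.card V := by
      rcases Nat.eq_zero_or_pos (Fintype.card V) with h | h
      · simp [h]
      · exact Nat.le_mul_of_pos_left _ h
    have h6 : (Fintype.card V) ^ 2 = Fintype.card V * Fintype.card V := by ring
    rw [h6]
    omega
  · intro B₁ B₂ h1 h2 hne
    obtain ⟨i₁⟩ := h1
    obtain ⟨i₂⟩ := h2
    obtain ⟨F₁, hF₁, hle1, hnle1⟩ := main B₁ B₂ i₁ i₂ hne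
    obtain ⟨F₂, hF₂, hle2, hnle2⟩ := main B₂ B₁ i₂ i₁ (Ne.symm hne)
    exact ⟨F₁, hF₁, F₂, hF₂, hle1, hnle1, hle2, hnle2⟩
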